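/- Let P be a finite p-group and let Q, R be subgroups of P with N_P(Q) = N_P(R) and this common normalizer normal in P. Then Q and R are related by the relation ⊑_P (i.e., there exists g ∈ P with Q^g ∩ Z_P(R) ≤ R and gRg^{-1} ∩ Z_P(Q) ≤ Q) if and only if Q and R are conjugate in P. -/

import Mathlib

/-- `H ^ g = g⁻¹ H g`, the conjugate of `H` by `g`. -/
def conjSub {G : Type*} [Group G] (H : Subgroup G) (g : G) : Subgroup G :=
  Subgroup.map (MulAut.conj g⁻¹).toMonoidHom H

/-- `g H g⁻¹`, the conjugate of `H` by `g` on the left. -/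
def conjSub' {G : Type*} [Group G] (g : G) (H : Subgroup G) : Subgroup G :=
  Subgroup.map (MulAut.conj g).toMonoidHom H

/-- `Z_P(Q)`: the subgroup of `N_P(Q)` containing `Q` with
`Z_P(Q)/Q = Z(N_P(Q)/Q)`. -/
def Zsub {G : Type*} [Group G] (Q : Subgroup G) : Subgroup G :=
  Subgroup.map (Subgroup.normalizer (Q : Set G)).subtype
    (Subgroup.comap (QuotientGroup.mk' (Q.subgroupOf (Subgroup.normalizer (Q : Set G))))
      (Subgroup.center (Subgroup.normalizer (Q : Set G) ⧸ Q.subgroupOf (Subgroup.normalizer (Q : Set G)))))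

open Subgroup

lemma mem_conjSub {G : Type*} [Group G] {H : Subgroup G} {g x : G} :
    x ∈ conjSub H g ↔ g * x * g⁻¹ ∈ H := by
  rw [conjSub, Subgroup.mem_map_equiv]
  simp [MulAut.conj]

lemma mem_conjSub' {G : Type*} [Group G] {H : Subgroup G} {g x : G} :
    x ∈ conjSub' g H ↔ g⁻¹ * x * g ∈ H := by
  rw [conjSub', Subgroup.mem_map_equiv]
  simp [MulAut.conj]

lemma map_conj_of_normal {G : Type*} [Group G] {N : Subgroup G} (hN : N.Normal) (g : G) :
    Subgroup.map (MulAut.conj g).toMonoidHom N = N := by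
  ext x
  rw [Subgroup.mem_map_equiv]
  constructor
  · intro h
    have := hN.conj_mem _ h g
    simpa [MulAut.conj, mul_assoc] using this
  · intro h
    have := hN.conj_mem _ h g⁻¹
    simpa [MulAut.conj, mul_assoc] using this

lemma conjSub_normalizer {G : Type*} [Group G] (H : Subgroup G)
    (hN : (normalizer (H : Set G)).Normal) (g : G) : (normalizer ((conjSub H g : Subgroup G) : Set G)) = (normalizer (H : Set G)) := by
  rw [conjSub, ← Subgroup.map_equiv_normalizer_eq H (MulAut.conj g⁻¹),
    map_conj_of_normal hN]

lemma conjSub'_normalizer {G : Type*} [Group G] (H : Subgroup G)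
    (hN : (normalizer (H : Set G)).Normal) (g : G) : (normalizer ((conjSub' g H : Subgroup G) : Set G)) = (normalizer (H : Set G)) := by
  rw [conjSub', ← Subgroup.map_equiv_normalizer_eq H (MulAut.conj g),
    map_conj_of_normal hN]

/-- The key lemma: if `A.normalizer = B.normalizer` and `A ⊓ Z_P(B) ≤ B` in a finite
`p`-group, then `A ≤ B`. -/
lemma le_of_inf_Zsub_le {p : ℕ} [Fact p.Prime] {P : Type*} [Group P] [Finite P]
    (hP : IsPGroup p P) (A B : Subgroup P) (hAB : (normalizer (A : Set P)) = (normalizer (B : Set P)))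
    (h : A ⊓ Zsub B ≤ B) : A ≤ B := by
  have hAle : A ≤ (normalizer (B : Set P)) := hAB ▸ Subgroup.le_normalizer
  set B' : Subgroup (normalizer (B : Set P)) := B.subgroupOf (normalizer (B : Set P)) with hB'
  set A' : Subgroup (normalizer (B : Set P)) := A.subgroupOf (normalizer (B : Set P)) with hA'
  haveI hA'n : A'.Normal := by
    have := Subgroup.normal_in_normalizer (H := A)
    rwa [hAB] at this
  set K : Subgroup ((normalizer (B : Set P)) ⧸ B') := A'.map (QuotientGroup.mk' B') with hK
  haveI hKn : K.Normal := hA'n.map _ (QuotientGroup.mk'_surjective B')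
  by_contra hcon
  obtain ⟨a, haA, haB⟩ : ∃ a ∈ A, a ∉ B := by
    by_contra hc
    push_neg at hc
    exact hcon hc
  -- K is nontrivial
  have hmem : QuotientGroup.mk' B' ⟨a, hAle haA⟩ ∈ K :=
    Subgroup.mem_map_of_mem _ (by simpa [hA', Subgroup.mem_subgroupOf] using haA)
  have hne1 : QuotientGroup.mk' B' ⟨a, hAle haA⟩ ≠ 1 := by
    intro hc
    rw [QuotientGroup.mk'_apply, QuotientGroup.eq_one_iff] at hc
    exact haB (by simpa [hB', Subgroup.mem_subgroupOf] using hc)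
  have hKnontriv : Nontrivial K := ⟨⟨⟨_, hmem⟩, 1, by simpa using hne1⟩⟩
  -- the quotient is a p-group
  have hG' : IsPGroup p ((normalizer (B : Set P)) ⧸ B') := (hP.to_subgroup (normalizer (B : Set P))).to_quotient B'
  have hKp : IsPGroup p K := hG'.to_subgroup K
  have hdvd : p ∣ Nat.card K := by
    obtain ⟨n, hn0, hn⟩ := hKp.nontrivial_iff_card.mp hKnontriv
    exact hn.symm ▸ dvd_pow_self _ (ne_of_gt hn0)
  -- find a nontrivial fixed point of the conjugation action, i.e. a central element of K
  have hfix := (hG'.of_equiv ConjAct.toConjAct).exists_fixed_point_of_prime_dvd_card_of_fixed_point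
    (α := K) hdvd (a := 1) (fun g => by simp)
  obtain ⟨b, hbfix, hb1⟩ := hfix
  have hbcent : (b : (normalizer (B : Set P)) ⧸ B') ∈ Subgroup.center ((normalizer (B : Set P)) ⧸ B') := by
    rw [Subgroup.mem_center_iff]
    intro y
    have := hbfix (ConjAct.toConjAct y)
    have hval : y * (b : (normalizer (B : Set P)) ⧸ B') * y⁻¹ = b := by
      have h2 := congrArg (Subtype.val) this
      rwa [ConjAct.Subgroup.val_conj_smul, ConjAct.toConjAct_smul] at h2
    calc y * b = (y * b * y⁻¹) * y := by group
    _ = b * y := by rw [hval]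
  -- b comes from A'
  obtain ⟨a', ha'A, ha'b⟩ := b.2
  -- the element a' lies in A ⊓ Zsub B
  have ha'Z : (a' : P) ∈ Zsub B := by
    refine ⟨a', ?_, rfl⟩
    show QuotientGroup.mk' B' a' ∈ Subgroup.center _
    rw [QuotientGroup.mk'_apply] at *
    rw [ha'b]
    exact hbcent
  have ha'mem : (a' : P) ∈ A ⊓ Zsub B := ⟨ha'A, ha'Z⟩
  have : a' ∈ B' := by simpa [hB', Subgroup.mem_subgroupOf] using h ha'mem
  have hb1' : (b : (normalizer (B : Set P)) ⧸ B') = 1 := by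
    rw [← ha'b, QuotientGroup.mk'_apply, QuotientGroup.eq_one_iff]
    exact this
  exact hb1 (Subtype.ext (by simpa using hb1')).symm

/-- Let `P` be a finite `p`-group and `Q`, `R` subgroups with
`N_P(Q) = N_P(R)` normal in `P`.  Then `Q ⊑_P R` (i.e. there is `g` with
`Q^g ∩ Z_P(R) ≤ R` and `gRg⁻¹ ∩ Z_P(Q) ≤ Q`) iff `Q` and `R` are conjugate. -/
theorem bizlie_iff_conj_of_normalizer_normal {p : ℕ} [Fact p.Prime]
    {P : Type*} [Group P] [Finite P] (hP : IsPGroup p P)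
    (Q R : Subgroup P) (hQR : Subgroup.normalizer (Q : Set P) = Subgroup.normalizer (R : Set P))
    (hN : (Subgroup.normalizer (Q : Set P)).Normal) :
    (∃ g : P, conjSub Q g ⊓ Zsub R ≤ R ∧ conjSub' g R ⊓ Zsub Q ≤ Q) ↔
      ∃ g : P, conjSub Q g = R := by
  constructor
  · rintro ⟨g, h1, h2⟩
    refine ⟨g, le_antisymm ?_ ?_⟩
    · refine le_of_inf_Zsub_le hP _ _ ?_ h1
      rw [conjSub_normalizer Q hN g, hQR]
    · have hNR : (normalizer (R : Set P)).Normal := hQR ▸ hN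
      have hle : conjSub' g R ≤ Q := by
        refine le_of_inf_Zsub_le hP _ _ ?_ h2
        rw [conjSub'_normalizer R hNR g, ← hQR]
      intro x hx
      rw [mem_conjSub]
      have hg : g⁻¹ * (g * x * g⁻¹) * g = x := by group
      exact hle (by rw [mem_conjSub', hg]; exact hx)
  · rintro ⟨g, hg⟩
    refine ⟨g, hg ▸ inf_le_left, ?_⟩
    refine le_trans inf_le_left ?_
    intro x hx
    rw [mem_conjSub'] at hx
    rw [← hg, mem_conjSub] at hx
    simpa [mul_assoc] using hx
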